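/- Let G be a graph with no chorded 6-cycle and no subgraph isomorphic to K_4, containing the wheel configuration C_4: vertex u_1 adjacent to u_2, u_3, u_4, u_5 which form a 4-cycle u_2 u_3 u_4 u_5 u_2. If P is a path in G joining u_2 and u_3 that avoids u_1, u_4, u_5, then the length of P is not 2, 3, or 4. -/
import Mathlib


open SimpleGraph

def HasChorded6Cycle {V : Type*} (G : SimpleGraph V) : Prop :=
  ∃ a b c d e g : V, List.Nodup [a, b, c, d, e, g] ∧
    G.Adj a b ∧ G.Adj b c ∧ G.Adj c d ∧ G.Adj d e ∧ G.Adj e g ∧ G.Adj g a ∧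
    (G.Adj a c ∨ G.Adj b d ∨ G.Adj c e ∨ G.Adj d g ∨ G.Adj e a ∨ G.Adj g b ∨
     G.Adj a d ∨ G.Adj b e ∨ G.Adj c g)

/-- In a graph with no chorded 6-cycle and no `K₄` subgraph containing the wheel `W₅`
(hub `u1`, rim 4-cycle `u2 u3 u4 u5 u2`), any path from `u2` to `u3` avoiding
`u1, u4, u5` has length different from 2, 3 and 4. -/
theorem wheel_adjacent_rim_path_length {V : Type*} (G : SimpleGraph V)
    (hc6 : ¬ HasChorded6Cycle G)
    (hK4 : ¬ ∃ a b c d : V, List.Nodup [a, b, c, d] ∧ G.Adj a b ∧ G.Adj a c ∧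
      G.Adj a d ∧ G.Adj b c ∧ G.Adj b d ∧ G.Adj c d)
    (u1 u2 u3 u4 u5 : V) (hnodup : List.Nodup [u1, u2, u3, u4, u5])
    (h12 : G.Adj u1 u2) (h13 : G.Adj u1 u3) (h14 : G.Adj u1 u4) (h15 : G.Adj u1 u5)
    (h23 : G.Adj u2 u3) (h34 : G.Adj u3 u4) (h45 : G.Adj u4 u5) (h52 : G.Adj u5 u2)
    (p : G.Walk u2 u3) (hp : p.IsPath)
    (h1 : u1 ∉ p.support) (h4 : u4 ∉ p.support) (h5 : u5 ∉ p.support) :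
    p.length ≠ 2 ∧ p.length ≠ 3 ∧ p.length ≠ 4 := by
  simp only [List.nodup_cons, List.mem_cons, List.not_mem_nil, or_false,
    List.nodup_nil, and_true, not_or] at hnodup
  refine ⟨?_, ?_, ?_⟩ <;> intro hlen
  · -- length 2 : p = u2 - x - u3, chorded 6-cycle u2 x u3 u4 u1 u5 with chord u2u3
    cases p with
    | nil => simp at hlen
    | cons ha q =>
      cases q with
      | nil => simp at hlen
      | cons hb r =>
        cases r with
        | cons hc s => simp [Walk.length_cons] at hlen
        | nil =>
          rename_i x
          have hs := hp.support_nodup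
          simp [Walk.support_cons, List.nodup_cons] at hs h1 h4 h5
          refine hc6 ⟨u2, x, u3, u4, u1, u5, ?_, ha, hb, h34, h14.symm, h15, h52,
            Or.inl h23⟩
          simp only [List.nodup_cons, List.mem_cons, List.not_mem_nil, or_false,
            List.nodup_nil, and_true, not_or]
          aesop
  · -- length 3 : p = u2 - x - y - u3, cycle u2 x y u3 u4 u5 with chord u2u3
    cases p with
    | nil => simp at hlen
    | cons ha q =>
      cases q with
      | nil => simp at hlen
      | cons hb r =>
        cases r with
        | nil => simp at hlen
        | cons hc s =>
          cases s with
          | cons hd t => simp [Walk.length_cons] at hlen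
          | nil =>
            rename_i x y
            have hs := hp.support_nodup
            simp [Walk.support_cons, List.nodup_cons] at hs h1 h4 h5
            refine hc6 ⟨u2, x, y, u3, u4, u5, ?_, ha, hb, hc, h34, h45, h52,
              Or.inr (Or.inr (Or.inr (Or.inr (Or.inr (Or.inr (Or.inl h23))))))⟩
            simp only [List.nodup_cons, List.mem_cons, List.not_mem_nil, or_false,
              List.nodup_nil, and_true, not_or]
            aesop
  · -- length 4 : p = u2 - x - y - z - u3, cycle u2 x y z u3 u1 with chord u2u3
    cases p with
    | nil => simp at hlen
    | cons ha q =>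
      cases q with
      | nil => simp at hlen
      | cons hb r =>
        cases r with
        | nil => simp at hlen
        | cons hc s =>
          cases s with
          | nil => simp at hlen
          | cons hd t =>
            cases t with
            | cons he w => simp [Walk.length_cons] at hlen
            | nil =>
              rename_i x y z
              have hs := hp.support_nodup
              simp [Walk.support_cons, List.nodup_cons] at hs h1 h4 h5
              refine hc6 ⟨u2, x, y, z, u3, u1, ?_, ha, hb, hc, hd, h13.symm, h12,
                Or.inr (Or.inr (Or.inr (Or.inr (Or.inl h23.symm))))⟩
              simp only [List.nodup_cons, List.mem_cons, List.not_mem_nil, or_false,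
                List.nodup_nil, and_true, not_or]
              have e1 : ¬ u2 = u1 := fun h => h1.1 h.symm
              have e2 : ¬ x = u1 := fun h => h1.2.1 h.symm
              have e3 : ¬ y = u1 := fun h => h1.2.2.1 h.symm
              have e4 : ¬ z = u1 := fun h => h1.2.2.2.1 h.symm
              have e5 : ¬ u3 = u1 := fun h => h1.2.2.2.2 h.symm
              tauto
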